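/- arXiv:2104.02280 — 3 statements merged into one kernel-verified Lean document; each statement's English description precedes it below -/
import Mathlib

section
/- Let n ≥ 5 and let A be the n×n clamped-free beam matrix. Define B ∈ ℝ^{n×n} (1-based indexing) by: b_{i,j} = (3ij² + j − j³)/6 for all 1 ≤ j ≤ i ≤ n with j ≤ n−1; b_{n,n} = n(2n²+1)/12; b_{i,n} = (1/2)·b_{n,i} = (3ni² + i − i³)/12 for 1 ≤ i ≤ n−1; and b_{i,j} = b_{j,i} for 1 ≤ i < j ≤ n−1. Then B·A = 1 and A·B = 1, i.e., B is the inverse of A. -/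
open scoped ENNReal

/-- The `n × n` clamped-free beam matrix (1-based index `i' = i+1`). -/
def A_CF (n : ℕ) : Matrix (Fin n) (Fin n) ℝ :=
  Matrix.of fun i j =>
    let i' := (i : ℕ) + 1
    let j' := (j : ℕ) + 1
    if i' = j' then (if i' = 1 then 7 else if i' = n - 1 then 5 else if i' = n then 2 else 6)
    else if j' = i' + 1 then (if i' = n - 1 then -2 else -4)
    else if i' = j' + 1 then -4
    else if j' = i' + 2 then 1
    else if i' = j' + 2 then (if i' = n then 2 else 1)
    else 0

/-- The claimed inverse `B` of the clamped-free beam matrix. -/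
noncomputable def Bmat (n : ℕ) : Matrix (Fin n) (Fin n) ℝ :=
  Matrix.of fun i j =>
    let x : ℝ := (i : ℕ) + 1
    let y : ℝ := (j : ℕ) + 1
    if (j : ℕ) ≤ (i : ℕ) then
      (if (i : ℕ) + 1 = n ∧ (j : ℕ) + 1 = n then (n : ℝ) * (2 * (n : ℝ) ^ 2 + 1) / 12
       else (3 * x * y ^ 2 + y - y ^ 3) / 6)
    else
      (if (j : ℕ) + 1 = n then (3 * (n : ℝ) * x ^ 2 + x - x ^ 3) / 12
       else (3 * y * x ^ 2 + x - x ^ 3) / 6)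

/-- ℕ-indexed version of `A_CF`. -/
def aF (n i j : ℕ) : ℝ :=
  if i + 1 = j + 1 then (if i + 1 = 1 then 7 else if i + 1 = n - 1 then 5 else if i + 1 = n then 2 else 6)
  else if j + 1 = (i + 1) + 1 then (if i + 1 = n - 1 then -2 else -4)
  else if i + 1 = (j + 1) + 1 then -4
  else if j + 1 = (i + 1) + 2 then 1
  else if i + 1 = (j + 1) + 2 then (if i + 1 = n then 2 else 1)
  else 0

/-- ℕ-indexed version of `Bmat`. -/
noncomputable def bF (n i j : ℕ) : ℝ :=
  if j ≤ i then
    (if i + 1 = n ∧ j + 1 = n then (n : ℝ) * (2 * (n : ℝ) ^ 2 + 1) / 12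
     else (3 * ((i : ℝ) + 1) * ((j : ℝ) + 1) ^ 2 + ((j : ℝ) + 1) - ((j : ℝ) + 1) ^ 3) / 6)
  else
    (if j + 1 = n then (3 * (n : ℝ) * ((i : ℝ) + 1) ^ 2 + ((i : ℝ) + 1) - ((i : ℝ) + 1) ^ 3) / 12
     else (3 * ((j : ℝ) + 1) * ((i : ℝ) + 1) ^ 2 + ((i : ℝ) + 1) - ((i : ℝ) + 1) ^ 3) / 6)

lemma aF_eq_zero {n i k : ℕ} (h : k + 2 < i ∨ i + 2 < k) : aF n i k = 0 := by
  unfold aF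
  split_ifs <;> first | rfl | (exfalso; omega)

lemma sum_Icc_top (f : ℕ → ℝ) {a b : ℕ} (h : a ≤ b + 1) :
    ∑ k ∈ Finset.Icc a (b + 1), f k = (∑ k ∈ Finset.Icc a b, f k) + f (b + 1) := by
  rw [← Finset.insert_Icc_right_eq_Icc_add_one h, Finset.sum_insert (by simp), add_comm]

lemma sum_Icc3 (f : ℕ → ℝ) (m : ℕ) :
    ∑ k ∈ Finset.Icc m (m + 2), f k = f m + f (m + 1) + f (m + 2) := by
  rw [show m + 2 = (m + 1) + 1 from rfl, sum_Icc_top f (by omega),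
    sum_Icc_top f (by omega), Finset.Icc_self, Finset.sum_singleton]

lemma sum_Icc4 (f : ℕ → ℝ) (m : ℕ) :
    ∑ k ∈ Finset.Icc m (m + 3), f k = f m + f (m + 1) + f (m + 2) + f (m + 3) := by
  rw [show m + 3 = (m + 2) + 1 from rfl, sum_Icc_top f (by omega), sum_Icc3]

lemma sum_Icc5 (f : ℕ → ℝ) (m : ℕ) :
    ∑ k ∈ Finset.Icc m (m + 4), f k = f m + f (m + 1) + f (m + 2) + f (m + 3) + f (m + 4) := by
  rw [show m + 4 = (m + 3) + 1 from rfl, sum_Icc_top f (by omega), sum_Icc4]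

lemma sum_reduce (n i j : ℕ) (hi : i < n) :
    ∑ k ∈ Finset.range n, aF n i k * bF n k j
      = ∑ k ∈ Finset.Icc (i - 2) (min (i + 2) (n - 1)), aF n i k * bF n k j := by
  symm
  apply Finset.sum_subset
  · intro k hk
    simp only [Finset.mem_Icc] at hk
    simp only [Finset.mem_range]
    omega
  · intro k hk hk2
    rw [aF_eq_zero, zero_mul]
    simp only [Finset.mem_Icc, Finset.mem_range, not_and_or, not_le] at hk hk2
    omega

set_option maxHeartbeats 2000000 in
lemma key (n i j : ℕ) (hn : 5 ≤ n) (hi : i < n) (hj : j < n) :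
    ∑ k ∈ Finset.Icc (i - 2) (min (i + 2) (n - 1)), aF n i k * bF n k j
      = if i = j then 1 else 0 := by
  match i with
  | 0 =>
    rw [show (0:ℕ) - 2 = 0 from rfl, show min (0 + 2) (n-1) = 0 + 2 by omega, sum_Icc3]
    have hcase : j = 0 ∨ j = 1 ∨ j = 2 ∨ (3 ≤ j ∧ j + 1 < n) ∨ (3 ≤ j ∧ j + 1 = n) := by omega
    rcases hcase with h|h|h|⟨h1,h2⟩|⟨h1,h2⟩ <;> try subst h
    all_goals (
      unfold aF bF
      simp (disch := omega) only [if_pos, if_neg, eq_self_iff_true, and_self, true_and, if_true]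
      push_cast
      ring)
  | 1 =>
    rw [show (1:ℕ) - 2 = 0 from rfl, show min (1 + 2) (n-1) = 3 by omega,
      show (3:ℕ) = 0 + 3 from rfl, sum_Icc4]
    have hcase : j = 0 ∨ j = 1 ∨ j = 2 ∨ j = 3 ∨ (4 ≤ j ∧ j + 1 < n) ∨ (4 ≤ j ∧ j + 1 = n) := by
      omega
    rcases hcase with h|h|h|h|⟨h1,h2⟩|⟨h1,h2⟩ <;> try subst h
    all_goals (
      unfold aF bF
      simp (disch := omega) only [if_pos, if_neg, eq_self_iff_true, and_self, true_and, if_true]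
      push_cast
      ring)
  | (m+2) =>
    rcases Nat.lt_or_ge (m + 4) n with hb | hb
    · -- generic interior row: 2 ≤ i ≤ n - 3
      rw [show m + 2 - 2 = m from by omega, show min (m + 2 + 2) (n-1) = m + 4 by omega, sum_Icc5]
      have hcase : j ≤ m ∨ j = m+1 ∨ j = m+2 ∨ j = m+3 ∨ (j = m+4 ∧ n = m+5) ∨
          (j = m+4 ∧ m+6 ≤ n) ∨ (m+5 ≤ j ∧ j + 1 < n) ∨ (m+5 ≤ j ∧ j + 1 = n) := by omega
      rcases hcase with h|rfl|rfl|rfl|⟨rfl,rfl⟩|⟨rfl,h6⟩|⟨h1,h2⟩|⟨h1,h2⟩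
      all_goals (
        unfold aF bF
        simp (disch := omega) only [if_pos, if_neg, eq_self_iff_true, and_self, true_and, if_true]
        push_cast
        ring)
    · -- right boundary rows: i = n-2 or i = n-1
      have hcase : n = m + 3 ∨ n = m + 4 := by omega
      rcases hcase with h | h <;> subst h
      · -- i = n - 1
        rw [show m + 2 - 2 = m from by omega, show min (m + 2 + 2) (m + 3 - 1) = m + 2 by omega,
          sum_Icc3]
        have hcase : j ≤ m ∨ j = m+1 ∨ j = m+2 := by omega
        rcases hcase with h|h|h <;> try subst h
        all_goals (
          unfold aF bF
          simp (disch := omega) only [if_pos, if_neg, eq_self_iff_true, and_self, true_and, if_true]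
          push_cast
          ring)
      · -- i = n - 2
        rw [show m + 2 - 2 = m from by omega, show min (m + 2 + 2) (m + 4 - 1) = m + 3 by omega,
          sum_Icc4]
        have hcase : j ≤ m ∨ j = m+1 ∨ j = m+2 ∨ j = m+3 := by omega
        rcases hcase with h|h|h|h <;> try subst h
        all_goals (
          unfold aF bF
          simp (disch := omega) only [if_pos, if_neg, eq_self_iff_true, and_self, true_and, if_true]
          push_cast
          ring)

/-- `B` is the two-sided inverse of the clamped-free beam matrix `A`. -/
theorem Bmat_is_inverse_of_A_CF (n : ℕ) (hn : 5 ≤ n) :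
    Bmat n * A_CF n = 1 ∧ A_CF n * Bmat n = 1 := by
  have hAB : A_CF n * Bmat n = 1 := by
    ext i j
    rw [Matrix.mul_apply]
    have h1 : (∑ k : Fin n, A_CF n i k * Bmat n k j)
        = ∑ k ∈ Finset.range n, aF n i.1 k * bF n k j.1 :=
      Fin.sum_univ_eq_sum_range (fun k => aF n i.1 k * bF n k j.1) n
    rw [h1, sum_reduce n i.1 j.1 i.2, key n i.1 j.1 hn i.2 j.2, Matrix.one_apply]
    simp [Fin.ext_iff]
  exact ⟨mul_eq_one_comm.mp hAB, hAB⟩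
end

section
/- Let n ≥ 5 and let A be the n×n clamped-free beam matrix. Then the spectral norm of the inverse satisfies ‖A⁻¹‖₂ ≤ (1/8)·√(n⁸ − n⁴), and in particular ‖A⁻¹‖₂ ≤ n⁴/8. -/
open scoped ENNReal

/-- The operator norm of an `n × n` real matrix induced by the vector `p`-norm
on `ℝⁿ` (realized as `PiLp`/`WithLp`). -/
noncomputable def opNormP (n : ℕ) (p : ℝ≥0∞) [Fact (1 ≤ p)]
    (B : Matrix (Fin n) (Fin n) ℝ) : ℝ :=
  ‖LinearMap.toContinuousLinearMap
    ((WithLp.linearEquiv p ℝ (Fin n → ℝ)).symm.toLinearMap ∘ₗ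
      Matrix.toLin' B ∘ₗ (WithLp.linearEquiv p ℝ (Fin n → ℝ)).toLinearMap)‖

/- ### Auxiliary definitions -/

noncomputable def av (n i j : ℕ) : ℝ :=
  if i = j then (if i = 1 then 7 else if i = n - 1 then 5 else if i = n then 2 else 6)
  else if j = i + 1 then (if i = n - 1 then -2 else -4)
  else if i = j + 1 then -4
  else if j = i + 2 then 1
  else if i = j + 2 then (if i = n then 2 else 1)
  else 0

lemma A_CF_apply (n : ℕ) (i j : Fin n) : A_CF n i j = av n ((i:ℕ)+1) ((j:ℕ)+1) := rfl

noncomputable def pf (a b : ℕ) : ℝ := (3*(a:ℝ)^2*b - (a:ℝ)^3 + a)/6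

noncomputable def gv (n i j : ℕ) : ℝ :=
  (if j = n then 2⁻¹ else 1) * (if i ≤ j then pf i j else pf j i)

noncomputable def Gmat (n : ℕ) : Matrix (Fin n) (Fin n) ℝ :=
  Matrix.of fun i j : Fin n => gv n ((i:ℕ)+1) ((j:ℕ)+1)

lemma av_zero {n i j : ℕ} (h : j + 3 ≤ i ∨ i + 3 ≤ j) : av n i j = 0 := by
  unfold av
  rw [if_neg (by omega), if_neg (by omega), if_neg (by omega), if_neg (by omega),
    if_neg (by omega)]

lemma gv_le {n i j : ℕ} (h : i ≤ j) : gv n i j = (if j = n then 2⁻¹ else 1) * pf i j := by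
  rw [gv, if_pos h]

lemma gv_ge {n i j : ℕ} (h : j ≤ i) : gv n i j = (if j = n then 2⁻¹ else 1) * pf j i := by
  rcases eq_or_lt_of_le h with rfl | hlt
  · rw [gv, if_pos le_rfl]
  · rw [gv, if_neg (not_le.mpr hlt)]

lemma row1 (m k : ℕ) (hk : 1 ≤ k) (hkn : k ≤ m + 5) :
    av (m+5) 1 1 * gv (m+5) 1 k + av (m+5) 1 2 * gv (m+5) 2 k
      + av (m+5) 1 3 * gv (m+5) 3 k = if 1 = k then 1 else 0 := by
  have h1 : av (m+5) 1 1 = 7 := by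
    unfold av; split_ifs <;> first | (exfalso; omega) | norm_num
  have h2 : av (m+5) 1 2 = -4 := by
    unfold av; split_ifs <;> first | (exfalso; omega) | norm_num
  have h3 : av (m+5) 1 3 = 1 := by
    unfold av; split_ifs <;> first | (exfalso; omega) | norm_num
  rw [h1, h2, h3]
  rcases (by omega : k = 1 ∨ k = 2 ∨ 3 ≤ k) with rfl | rfl | h
  · rw [if_pos rfl, gv_le (by omega), gv_ge (by omega), gv_ge (by omega),
      if_neg (show ¬(1 = m+5) by omega)]
    unfold pf; push_cast; ring
  · rw [if_neg (by omega), gv_le (by omega), gv_le (by omega), gv_ge (by omega),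
      if_neg (show ¬(2 = m+5) by omega)]
    unfold pf; push_cast; ring
  · rw [if_neg (by omega), gv_le (by omega), gv_le (by omega), gv_le (by omega)]
    unfold pf; push_cast; ring

lemma row2 (m k : ℕ) (hk : 1 ≤ k) (hkn : k ≤ m + 5) :
    av (m+5) 2 1 * gv (m+5) 1 k + av (m+5) 2 2 * gv (m+5) 2 k
      + av (m+5) 2 3 * gv (m+5) 3 k + av (m+5) 2 4 * gv (m+5) 4 k
      = if 2 = k then 1 else 0 := by
  have h1 : av (m+5) 2 1 = -4 := by
    unfold av; split_ifs <;> first | (exfalso; omega) | norm_num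
  have h2 : av (m+5) 2 2 = 6 := by
    unfold av; split_ifs <;> first | (exfalso; omega) | norm_num
  have h3 : av (m+5) 2 3 = -4 := by
    unfold av; split_ifs <;> first | (exfalso; omega) | norm_num
  have h4 : av (m+5) 2 4 = 1 := by
    unfold av; split_ifs <;> first | (exfalso; omega) | norm_num
  rw [h1, h2, h3, h4]
  rcases (by omega : k = 1 ∨ k = 2 ∨ k = 3 ∨ 4 ≤ k) with rfl | rfl | rfl | h
  · rw [if_neg (by omega), gv_le (by omega), gv_ge (by omega), gv_ge (by omega),
      gv_ge (by omega)]
    unfold pf; push_cast; ring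
  · rw [if_pos rfl, gv_le (by omega), gv_le (by omega), gv_ge (by omega),
      gv_ge (by omega), if_neg (show ¬(2 = m+5) by omega)]
    unfold pf; push_cast; ring
  · rw [if_neg (by omega), gv_le (by omega), gv_le (by omega), gv_le (by omega),
      gv_ge (by omega)]
    unfold pf; push_cast; ring
  · rw [if_neg (by omega), gv_le (by omega), gv_le (by omega), gv_le (by omega),
      gv_le (by omega)]
    unfold pf; push_cast; ring

lemma rowG (m t k : ℕ) (ht : t ≤ m) (hk : 1 ≤ k) (hkn : k ≤ m + 5) :
    av (m+5) (t+3) (t+1) * gv (m+5) (t+1) k + av (m+5) (t+3) (t+2) * gv (m+5) (t+2) k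
    + av (m+5) (t+3) (t+3) * gv (m+5) (t+3) k + av (m+5) (t+3) (t+4) * gv (m+5) (t+4) k
    + av (m+5) (t+3) (t+5) * gv (m+5) (t+5) k = if t+3 = k then 1 else 0 := by
  have h1 : av (m+5) (t+3) (t+1) = 1 := by
    unfold av; split_ifs <;> first | (exfalso; omega) | norm_num
  have h2 : av (m+5) (t+3) (t+2) = -4 := by
    unfold av; split_ifs <;> first | (exfalso; omega) | norm_num
  have h3 : av (m+5) (t+3) (t+3) = 6 := by
    unfold av; split_ifs <;> first | (exfalso; omega) | norm_num
  have h4 : av (m+5) (t+3) (t+4) = -4 := by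
    unfold av; split_ifs <;> first | (exfalso; omega) | norm_num
  have h5 : av (m+5) (t+3) (t+5) = 1 := by
    unfold av; split_ifs <;> first | (exfalso; omega) | norm_num
  rw [h1, h2, h3, h4, h5]
  rcases (by omega : k ≤ t+1 ∨ k = t+2 ∨ k = t+3 ∨ k = t+4 ∨ t+5 ≤ k) with
    h | rfl | rfl | rfl | h
  · rw [if_neg (by omega), gv_ge (by omega), gv_ge (by omega), gv_ge (by omega),
      gv_ge (by omega), gv_ge (by omega)]
    unfold pf; push_cast; ring
  · rw [if_neg (by omega), gv_le (by omega), gv_le (by omega), gv_ge (by omega),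
      gv_ge (by omega), gv_ge (by omega)]
    unfold pf; push_cast; ring
  · rw [if_pos rfl, gv_le (by omega), gv_le (by omega), gv_le (by omega),
      gv_ge (by omega), gv_ge (by omega), if_neg (show ¬(t+3 = m+5) by omega)]
    unfold pf; push_cast; ring
  · rw [if_neg (by omega), gv_le (by omega), gv_le (by omega), gv_le (by omega),
      gv_le (by omega), gv_ge (by omega)]
    unfold pf; push_cast; ring
  · rw [if_neg (by omega), gv_le (by omega), gv_le (by omega), gv_le (by omega),
      gv_le (by omega), gv_le (by omega)]
    unfold pf; push_cast; ring

lemma rowN1 (m k : ℕ) (hk : 1 ≤ k) (hkn : k ≤ m + 5) :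
    av (m+5) (m+4) (m+2) * gv (m+5) (m+2) k + av (m+5) (m+4) (m+3) * gv (m+5) (m+3) k
    + av (m+5) (m+4) (m+4) * gv (m+5) (m+4) k + av (m+5) (m+4) (m+5) * gv (m+5) (m+5) k
    = if m+4 = k then 1 else 0 := by
  have h1 : av (m+5) (m+4) (m+2) = 1 := by
    unfold av; split_ifs <;> first | (exfalso; omega) | norm_num
  have h2 : av (m+5) (m+4) (m+3) = -4 := by
    unfold av; split_ifs <;> first | (exfalso; omega) | norm_num
  have h3 : av (m+5) (m+4) (m+4) = 5 := by
    unfold av; split_ifs <;> first | (exfalso; omega) | norm_num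
  have h4 : av (m+5) (m+4) (m+5) = -2 := by
    unfold av; split_ifs <;> first | (exfalso; omega) | norm_num
  rw [h1, h2, h3, h4]
  rcases (by omega : k ≤ m+2 ∨ k = m+3 ∨ k = m+4 ∨ k = m+5) with h | rfl | rfl | rfl
  · rw [if_neg (by omega), gv_ge (by omega), gv_ge (by omega), gv_ge (by omega),
      gv_ge (by omega)]
    unfold pf; push_cast; ring
  · rw [if_neg (by omega), gv_le (by omega), gv_le (by omega), gv_ge (by omega),
      gv_ge (by omega)]
    unfold pf; push_cast; ring
  · rw [if_pos rfl, gv_le (by omega), gv_le (by omega), gv_le (by omega),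
      gv_ge (by omega), if_neg (show ¬(m+4 = m+5) by omega)]
    unfold pf; push_cast; ring
  · rw [if_neg (by omega), gv_le (by omega), gv_le (by omega), gv_le (by omega),
      gv_le (by omega), if_pos rfl]
    unfold pf; push_cast; ring

lemma rowN (m k : ℕ) (hk : 1 ≤ k) (hkn : k ≤ m + 5) :
    av (m+5) (m+5) (m+3) * gv (m+5) (m+3) k + av (m+5) (m+5) (m+4) * gv (m+5) (m+4) k
    + av (m+5) (m+5) (m+5) * gv (m+5) (m+5) k = if m+5 = k then 1 else 0 := by
  have h1 : av (m+5) (m+5) (m+3) = 2 := by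
    unfold av; split_ifs <;> first | (exfalso; omega) | norm_num
  have h2 : av (m+5) (m+5) (m+4) = -4 := by
    unfold av; split_ifs <;> first | (exfalso; omega) | norm_num
  have h3 : av (m+5) (m+5) (m+5) = 2 := by
    unfold av; split_ifs <;> first | (exfalso; omega) | norm_num
  rw [h1, h2, h3]
  rcases (by omega : k ≤ m+3 ∨ k = m+4 ∨ k = m+5) with h | rfl | rfl
  · rw [if_neg (by omega), gv_ge (by omega), gv_ge (by omega), gv_ge (by omega)]
    unfold pf; push_cast; ring
  · rw [if_neg (by omega), gv_le (by omega), gv_le (by omega), gv_ge (by omega)]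
    unfold pf; push_cast; ring
  · rw [if_pos rfl, gv_le (by omega), gv_le (by omega), gv_le (by omega), if_pos rfl]
    unfold pf; push_cast; ring

lemma key_s5 (m i k : ℕ) (hi : 1 ≤ i) (hin : i ≤ m+5) (hk : 1 ≤ k) (hkn : k ≤ m+5) :
    ∑ j ∈ Finset.range (m+5), av (m+5) i (j+1) * gv (m+5) (j+1) k
      = if i = k then 1 else 0 := by
  rcases (by omega : i = 1 ∨ i = 2 ∨ i = m+4 ∨ i = m+5 ∨ (3 ≤ i ∧ i ≤ m+3)) with
    rfl | rfl | rfl | rfl | ⟨h3, h4⟩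
  · rw [← Finset.sum_subset (show ({0,1,2} : Finset ℕ) ⊆ Finset.range (m+5) by
        intro x hx; simp only [Finset.mem_insert, Finset.mem_singleton] at hx
        simp only [Finset.mem_range]; omega)
      (fun x hxr hxs => by
        simp only [Finset.mem_range] at hxr
        simp only [Finset.mem_insert, Finset.mem_singleton, not_or] at hxs
        rw [av_zero (by omega), zero_mul])]
    rw [Finset.sum_insert (by simp only [Finset.mem_insert, Finset.mem_singleton]; omega),
      Finset.sum_insert (by simp only [Finset.mem_singleton]; omega),
      Finset.sum_singleton]
    linear_combination row1 m k hk hkn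
  · rw [← Finset.sum_subset (show ({0,1,2,3} : Finset ℕ) ⊆ Finset.range (m+5) by
        intro x hx; simp only [Finset.mem_insert, Finset.mem_singleton] at hx
        simp only [Finset.mem_range]; omega)
      (fun x hxr hxs => by
        simp only [Finset.mem_range] at hxr
        simp only [Finset.mem_insert, Finset.mem_singleton, not_or] at hxs
        rw [av_zero (by omega), zero_mul])]
    rw [Finset.sum_insert (by simp only [Finset.mem_insert, Finset.mem_singleton]; omega),
      Finset.sum_insert (by simp only [Finset.mem_insert, Finset.mem_singleton]; omega),
      Finset.sum_insert (by simp only [Finset.mem_singleton]; omega),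
      Finset.sum_singleton]
    linear_combination row2 m k hk hkn
  · rw [← Finset.sum_subset (show ({m+1,m+2,m+3,m+4} : Finset ℕ) ⊆ Finset.range (m+5) by
        intro x hx; simp only [Finset.mem_insert, Finset.mem_singleton] at hx
        simp only [Finset.mem_range]; omega)
      (fun x hxr hxs => by
        simp only [Finset.mem_range] at hxr
        simp only [Finset.mem_insert, Finset.mem_singleton, not_or] at hxs
        rw [av_zero (by omega), zero_mul])]
    rw [Finset.sum_insert (by simp only [Finset.mem_insert, Finset.mem_singleton]; omega),
      Finset.sum_insert (by simp only [Finset.mem_insert, Finset.mem_singleton]; omega),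
      Finset.sum_insert (by simp only [Finset.mem_singleton]; omega),
      Finset.sum_singleton]
    linear_combination rowN1 m k hk hkn
  · rw [← Finset.sum_subset (show ({m+2,m+3,m+4} : Finset ℕ) ⊆ Finset.range (m+5) by
        intro x hx; simp only [Finset.mem_insert, Finset.mem_singleton] at hx
        simp only [Finset.mem_range]; omega)
      (fun x hxr hxs => by
        simp only [Finset.mem_range] at hxr
        simp only [Finset.mem_insert, Finset.mem_singleton, not_or] at hxs
        rw [av_zero (by omega), zero_mul])]
    rw [Finset.sum_insert (by simp only [Finset.mem_insert, Finset.mem_singleton]; omega),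
      Finset.sum_insert (by simp only [Finset.mem_singleton]; omega),
      Finset.sum_singleton]
    linear_combination rowN m k hk hkn
  · obtain ⟨t, rfl, ht⟩ : ∃ t, i = t + 3 ∧ t ≤ m := ⟨i - 3, by omega, by omega⟩
    rw [← Finset.sum_subset (show ({t,t+1,t+2,t+3,t+4} : Finset ℕ) ⊆ Finset.range (m+5) by
        intro x hx; simp only [Finset.mem_insert, Finset.mem_singleton] at hx
        simp only [Finset.mem_range]; omega)
      (fun x hxr hxs => by
        simp only [Finset.mem_range] at hxr
        simp only [Finset.mem_insert, Finset.mem_singleton, not_or] at hxs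
        rw [av_zero (by omega), zero_mul])]
    rw [Finset.sum_insert (by simp only [Finset.mem_insert, Finset.mem_singleton]; omega),
      Finset.sum_insert (by simp only [Finset.mem_insert, Finset.mem_singleton]; omega),
      Finset.sum_insert (by simp only [Finset.mem_insert, Finset.mem_singleton]; omega),
      Finset.sum_insert (by simp only [Finset.mem_singleton]; omega),
      Finset.sum_singleton]
    linear_combination rowG m t k ht hk hkn

lemma AG (n : ℕ) (hn : 5 ≤ n) : A_CF n * Gmat n = 1 := by
  obtain ⟨m, rfl⟩ : ∃ m, n = m + 5 := ⟨n - 5, by omega⟩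
  ext i k
  rw [Matrix.mul_apply, Matrix.one_apply]
  have h : ∀ j : Fin (m+5), A_CF (m+5) i j * Gmat (m+5) j k
      = av (m+5) ((i:ℕ)+1) ((j:ℕ)+1) * gv (m+5) ((j:ℕ)+1) ((k:ℕ)+1) := fun j => rfl
  simp only [h]
  rw [Fin.sum_univ_eq_sum_range
    (fun j => av (m+5) ((i:ℕ)+1) (j+1) * gv (m+5) (j+1) ((k:ℕ)+1))]
  rw [key_s5 m ((i:ℕ)+1) ((k:ℕ)+1) (by omega) (by omega) (by omega) (by omega)]
  by_cases hik : i = k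
  · rw [if_pos (by omega), if_pos hik]
  · rw [if_neg (by simp [Fin.ext_iff] at hik ⊢; omega), if_neg hik]

lemma S2 (n : ℕ) : ∑ i ∈ Finset.range n, ((i:ℝ)+1)^2 = ((n:ℝ)*(n+1)*(2*n+1))/6 := by
  induction n with
  | zero => simp
  | succ n ih => rw [Finset.sum_range_succ, ih]; push_cast; ring

lemma S3 (n : ℕ) : ∑ i ∈ Finset.range n, ((i:ℝ)+1)^3 = ((n:ℝ)^2*(n+1)^2)/4 := by
  induction n with
  | zero => simp
  | succ n ih => rw [Finset.sum_range_succ, ih]; push_cast; ring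

lemma S4 (n : ℕ) : ∑ i ∈ Finset.range n, ((i:ℝ)+1)^4
    = ((n:ℝ)*(n+1)*(2*n+1)*(3*n^2+3*n-1))/30 := by
  induction n with
  | zero => simp
  | succ n ih => rw [Finset.sum_range_succ, ih]; push_cast; ring

lemma S5 (n : ℕ) : ∑ i ∈ Finset.range n, ((i:ℝ)+1)^5
    = ((n:ℝ)^2*(n+1)^2*(2*n^2+2*n-1))/12 := by
  induction n with
  | zero => simp
  | succ n ih => rw [Finset.sum_range_succ, ih]; push_cast; ring

lemma S6 (n : ℕ) : ∑ i ∈ Finset.range n, ((i:ℝ)+1)^6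
    = ((n:ℝ)*(n+1)*(2*n+1)*(3*n^4+6*n^3-3*n+1))/42 := by
  induction n with
  | zero => simp
  | succ n ih => rw [Finset.sum_range_succ, ih]; push_cast; ring

lemma crossSum (n : ℕ) : ∑ i ∈ Finset.range n, (pf (i+1) (n+1))^2
    = (66*(n:ℝ)^7+322*n^6+693*n^5+805*n^4+504*n^3+133*n^2-3*n)/2520 := by
  have h : ∀ i ∈ Finset.range n, (pf (i+1) (n+1))^2
      = ((9*((n:ℝ)+1)^2-2)/36) * ((i:ℝ)+1)^4 + (-(((n:ℝ)+1)/6)) * ((i:ℝ)+1)^5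
        + (1/36) * ((i:ℝ)+1)^6 + (((n:ℝ)+1)/6) * ((i:ℝ)+1)^3 + (1/36) * ((i:ℝ)+1)^2 := by
    intro i _
    unfold pf; push_cast; ring
  rw [Finset.sum_congr rfl h]
  simp only [Finset.sum_add_distrib, ← Finset.mul_sum]
  rw [S2 n, S3 n, S4 n, S5 n, S6 n]
  ring

lemma WsumEq (n : ℕ) :
    ∑ i ∈ Finset.range n, ∑ k ∈ Finset.range n,
      (pf (min (i+1) (k+1)) (max (i+1) (k+1)))^2
    = (11*(n:ℝ)^8+44*n^7+84*n^6+98*n^5+84*n^4+56*n^3+31*n^2+12*n)/1680 := by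
  induction n with
  | zero => simp
  | succ n ih =>
    rw [Finset.sum_range_succ]
    simp only [Finset.sum_range_succ]
    rw [Finset.sum_add_distrib, ih]
    have hc1 : ∑ i ∈ Finset.range n, (pf (min (i+1) (n+1)) (max (i+1) (n+1)))^2
        = ∑ i ∈ Finset.range n, (pf (i+1) (n+1))^2 :=
      Finset.sum_congr rfl fun i hi => by
        have := Finset.mem_range.mp hi
        rw [min_eq_left (by omega), max_eq_right (by omega)]
    have hc2 : ∑ k ∈ Finset.range n, (pf (min (n+1) (k+1)) (max (n+1) (k+1)))^2
        = ∑ k ∈ Finset.range n, (pf (k+1) (n+1))^2 :=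
      Finset.sum_congr rfl fun k hk => by
        have := Finset.mem_range.mp hk
        rw [min_eq_right (by omega), max_eq_left (by omega)]
    rw [hc1, hc2, crossSum n, min_self, max_self]
    unfold pf; push_cast; ring

lemma opNormP_le_frob (n : ℕ) (B : Matrix (Fin n) (Fin n) ℝ) (c : ℝ) (hc : 0 ≤ c)
    (h : ∑ i : Fin n, ∑ j : Fin n, (B i j)^2 ≤ c^2) : opNormP n 2 B ≤ c := by
  rw [opNormP]
  apply ContinuousLinearMap.opNorm_le_bound _ hc
  intro x
  have hx : ∀ y : WithLp 2 (Fin n → ℝ),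
      ‖y‖ = Real.sqrt (∑ i, (WithLp.equiv 2 (Fin n → ℝ) y i)^2) := by
    intro y
    rw [EuclideanSpace.norm_eq]
    congr 1
    refine Finset.sum_congr rfl fun i _ => ?_
    rw [Real.norm_eq_abs, sq_abs]; rfl
  rw [hx, hx]
  set v : Fin n → ℝ := WithLp.equiv 2 (Fin n → ℝ) x with hv
  have hval : ∀ i, WithLp.equiv 2 (Fin n → ℝ)
      ((LinearMap.toContinuousLinearMap
        ((WithLp.linearEquiv 2 ℝ (Fin n → ℝ)).symm.toLinearMap ∘ₗ
          Matrix.toLin' B ∘ₗ (WithLp.linearEquiv 2 ℝ (Fin n → ℝ)).toLinearMap)) x) i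
      = ∑ j, B i j * v j := by
    intro i
    show Matrix.toLin' B v i = _
    rw [Matrix.toLin'_apply]
    rfl
  simp only [hval]
  calc Real.sqrt (∑ i, (∑ j, B i j * v j)^2)
      ≤ Real.sqrt (c^2 * ∑ j, (v j)^2) := by
        apply Real.sqrt_le_sqrt
        calc ∑ i, (∑ j, B i j * v j)^2
            ≤ ∑ i : Fin n, (∑ j, (B i j)^2) * (∑ j, (v j)^2) :=
              Finset.sum_le_sum fun i _ =>
                Finset.sum_mul_sq_le_sq_mul_sq _ _ _
          _ = (∑ i : Fin n, ∑ j, (B i j)^2) * (∑ j, (v j)^2) := by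
              rw [Finset.sum_mul]
          _ ≤ c^2 * ∑ j, (v j)^2 := by
              apply mul_le_mul_of_nonneg_right h
              exact Finset.sum_nonneg fun j _ => sq_nonneg _
    _ = c * Real.sqrt (∑ j, (v j)^2) := by
        rw [Real.sqrt_mul (sq_nonneg c), Real.sqrt_sq hc]

lemma sq_scale_le (w X : ℝ) (h : w = 2⁻¹ ∨ w = 1) : (w*X)^2 ≤ X^2 := by
  rcases h with rfl | rfl <;> nlinarith [sq_nonneg X]

lemma gv_sq_le (n i k : ℕ) : (gv n i k)^2 ≤ (pf (min i k) (max i k))^2 := by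
  by_cases h : i ≤ k
  · rw [gv, if_pos h, min_eq_left h, max_eq_right h]
    apply sq_scale_le
    split_ifs <;> simp
  · have h' : k ≤ i := le_of_not_ge h
    rw [gv, if_neg h, min_eq_right h', max_eq_left h']
    apply sq_scale_le
    split_ifs <;> simp

lemma polyIneq (n : ℕ) (hn : 5 ≤ n) :
    (11*(n:ℝ)^8+44*n^7+84*n^6+98*n^5+84*n^4+56*n^3+31*n^2+12*n)/1680
      ≤ ((n:ℝ)^8 - n^4)/64 := by
  obtain ⟨m, rfl⟩ : ∃ m, n = m + 5 := ⟨n - 5, by omega⟩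
  have hm : (0:ℝ) ≤ m := Nat.cast_nonneg m
  rw [div_le_div_iff₀ (by norm_num) (by norm_num)]
  push_cast
  nlinarith [pow_nonneg hm 2, pow_nonneg hm 3, pow_nonneg hm 4, pow_nonneg hm 5,
    pow_nonneg hm 6, pow_nonneg hm 7, pow_nonneg hm 8, hm]

/-- The spectral norm of the inverse of the clamped-free beam matrix satisfies
`‖A⁻¹‖₂ ≤ √(n⁸ - n⁴)/8`, and in particular `‖A⁻¹‖₂ ≤ n⁴/8`. -/
theorem A_CF_inv_two_norm_bound (n : ℕ) (hn : 5 ≤ n) :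
    opNormP n 2 (A_CF n)⁻¹ ≤ Real.sqrt ((n : ℝ) ^ 8 - (n : ℝ) ^ 4) / 8 ∧
    opNormP n 2 (A_CF n)⁻¹ ≤ (n : ℝ) ^ 4 / 8 := by
  have h1 : (1:ℝ) ≤ (n:ℝ) := by exact_mod_cast (by omega : 1 ≤ n)
  have h48 : (n:ℝ)^4 ≤ (n:ℝ)^8 := pow_le_pow_right₀ h1 (by norm_num)
  have hX : (0:ℝ) ≤ (n:ℝ)^8 - (n:ℝ)^4 := by linarith
  have hinv : (A_CF n)⁻¹ = Gmat n := Matrix.inv_eq_right_inv (AG n hn)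
  have hfrob : ∑ i : Fin n, ∑ k : Fin n, ((A_CF n)⁻¹ i k)^2
      ≤ (Real.sqrt ((n : ℝ) ^ 8 - (n : ℝ) ^ 4) / 8)^2 := by
    rw [hinv]
    have h2 : ∀ i : Fin n, ∑ k : Fin n, (Gmat n i k)^2
        = ∑ k ∈ Finset.range n, (gv n ((i:ℕ)+1) (k+1))^2 := fun i =>
      Fin.sum_univ_eq_sum_range (fun k => (gv n ((i:ℕ)+1) (k+1))^2) n
    simp only [h2]
    rw [Fin.sum_univ_eq_sum_range
      (fun i => ∑ k ∈ Finset.range n, (gv n (i+1) (k+1))^2)]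
    have h3 : ∑ i ∈ Finset.range n, ∑ k ∈ Finset.range n, (gv n (i+1) (k+1))^2
        ≤ ∑ i ∈ Finset.range n, ∑ k ∈ Finset.range n,
            (pf (min (i+1) (k+1)) (max (i+1) (k+1)))^2 :=
      Finset.sum_le_sum fun i _ => Finset.sum_le_sum fun k _ => gv_sq_le n (i+1) (k+1)
    have h4 : (Real.sqrt ((n : ℝ) ^ 8 - (n : ℝ) ^ 4) / 8)^2 = ((n:ℝ)^8 - (n:ℝ)^4)/64 := by
      rw [div_pow, Real.sq_sqrt hX]
      norm_num
    rw [h4, WsumEq n] at *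
    exact le_trans h3 (polyIneq n hn)
  constructor
  · exact opNormP_le_frob n _ _ (by positivity) hfrob
  · refine le_trans (opNormP_le_frob n _ _ (by positivity) hfrob) ?_
    have : Real.sqrt ((n : ℝ) ^ 8 - (n : ℝ) ^ 4) ≤ (n:ℝ)^4 :=
      calc Real.sqrt ((n : ℝ) ^ 8 - (n : ℝ) ^ 4)
          ≤ Real.sqrt (((n:ℝ)^4)^2) := Real.sqrt_le_sqrt (by nlinarith [pow_nonneg (by linarith : (0:ℝ) ≤ (n:ℝ)) 4])
        _ = (n:ℝ)^4 := Real.sqrt_sq (by positivity)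
    gcongr
end

section
/- Let n ≥ 5, let A be the n×n clamped-free beam matrix, and let u ∈ ℝⁿ (entries u₁, …, u_n) satisfy (A u)_i > 0 for every i = 1, …, n. Then for every index j with 1 ≤ j ≤ n−3, the following two inequalities hold: u_{j+2} − u_{j+1} > u_{j+1} − u_j, and 3(u_{j+2} − u_{j+1}) > u_{j+3} − u_j. -/
open scoped ENNReal

private lemma ueq {n : ℕ} (u : Fin n → ℝ) {a b : ℕ} (h : a = b) (ha : a < n) (hb : b < n) :
    u ⟨a, ha⟩ = u ⟨b, hb⟩ := by subst h; rfl

private lemma sum_if_eq {n p : ℕ} (hp : p < n) (c : ℝ) (u : Fin n → ℝ) :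
    (∑ k : Fin n, if (k : ℕ) = p then c * u k else 0) = c * u ⟨p, hp⟩ := by
  rw [Finset.sum_eq_single (⟨p, hp⟩ : Fin n)]
  · simp
  · intro b _ hb
    rw [if_neg]
    simpa [Fin.ext_iff] using hb
  · simp

set_option maxHeartbeats 1000000 in
private lemma row_interior {n : ℕ} (hn : 5 ≤ n) (u : Fin n → ℝ) (i : ℕ) (h2 : 2 ≤ i)
    (h3 : i ≤ n - 3) :
    (A_CF n).mulVec u ⟨i, by have := h2; omega⟩ =
      u ⟨i - 2, by have := h2; omega⟩ - 4 * u ⟨i - 1, by have := h2; omega⟩ + 6 * u ⟨i, by have := h2; omega⟩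
        - 4 * u ⟨i + 1, by have := h2; omega⟩ + u ⟨i + 2, by have := h2; omega⟩ := by
  have hpt : ∀ k : Fin n, A_CF n ⟨i, by omega⟩ k * u k =
      (if (k : ℕ) = i - 2 then (1 : ℝ) * u k else 0)
      + (if (k : ℕ) = i - 1 then (-4 : ℝ) * u k else 0)
      + (if (k : ℕ) = i then (6 : ℝ) * u k else 0)
      + (if (k : ℕ) = i + 1 then (-4 : ℝ) * u k else 0)
      + (if (k : ℕ) = i + 2 then (1 : ℝ) * u k else 0) := by
    intro k
    have hk := k.isLt
    simp only [A_CF, Matrix.of_apply]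
    split_ifs <;> first | ring1 | (exfalso; omega)
  simp only [Matrix.mulVec, dotProduct]
  rw [Finset.sum_congr rfl (fun k _ => hpt k), Finset.sum_add_distrib, Finset.sum_add_distrib,
    Finset.sum_add_distrib, Finset.sum_add_distrib, sum_if_eq (by omega : i - 2 < n),
    sum_if_eq (by omega : i - 1 < n), sum_if_eq (by omega : i < n),
    sum_if_eq (by omega : i + 1 < n), sum_if_eq (by omega : i + 2 < n)]
  ring

set_option maxHeartbeats 1000000 in
private lemma row_penult {n : ℕ} (hn : 5 ≤ n) (u : Fin n → ℝ) :
    (A_CF n).mulVec u ⟨n - 2, by omega⟩ =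
      u ⟨n - 4, by omega⟩ - 4 * u ⟨n - 3, by omega⟩ + 5 * u ⟨n - 2, by omega⟩
        - 2 * u ⟨n - 1, by omega⟩ := by
  have hpt : ∀ k : Fin n, A_CF n ⟨n - 2, by omega⟩ k * u k =
      (if (k : ℕ) = n - 4 then (1 : ℝ) * u k else 0)
      + (if (k : ℕ) = n - 3 then (-4 : ℝ) * u k else 0)
      + (if (k : ℕ) = n - 2 then (5 : ℝ) * u k else 0)
      + (if (k : ℕ) = n - 1 then (-2 : ℝ) * u k else 0) := by
    intro k
    have hk := k.isLt
    simp only [A_CF, Matrix.of_apply]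
    split_ifs <;> first | ring1 | (exfalso; omega)
  simp only [Matrix.mulVec, dotProduct]
  rw [Finset.sum_congr rfl (fun k _ => hpt k), Finset.sum_add_distrib, Finset.sum_add_distrib,
    Finset.sum_add_distrib, sum_if_eq (by omega : n - 4 < n),
    sum_if_eq (by omega : n - 3 < n), sum_if_eq (by omega : n - 2 < n),
    sum_if_eq (by omega : n - 1 < n)]
  ring

set_option maxHeartbeats 1000000 in
private lemma row_last {n : ℕ} (hn : 5 ≤ n) (u : Fin n → ℝ) :
    (A_CF n).mulVec u ⟨n - 1, by omega⟩ =
      2 * u ⟨n - 3, by omega⟩ - 4 * u ⟨n - 2, by omega⟩ + 2 * u ⟨n - 1, by omega⟩ := by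
  have hpt : ∀ k : Fin n, A_CF n ⟨n - 1, by omega⟩ k * u k =
      (if (k : ℕ) = n - 3 then (2 : ℝ) * u k else 0)
      + (if (k : ℕ) = n - 2 then (-4 : ℝ) * u k else 0)
      + (if (k : ℕ) = n - 1 then (2 : ℝ) * u k else 0) := by
    intro k
    have hk := k.isLt
    simp only [A_CF, Matrix.of_apply]
    split_ifs <;> first | ring1 | (exfalso; omega)
  simp only [Matrix.mulVec, dotProduct]
  rw [Finset.sum_congr rfl (fun k _ => hpt k), Finset.sum_add_distrib, Finset.sum_add_distrib,
    sum_if_eq (by omega : n - 3 < n), sum_if_eq (by omega : n - 2 < n),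
    sum_if_eq (by omega : n - 1 < n)]
  ring

/-- Second difference `u_{i-1} - 2 u_i + u_{i+1}` (0-based center `i`). -/
private noncomputable def Vd {n : ℕ} (u : Fin n → ℝ) (i : ℕ) : ℝ :=
  if h : 1 ≤ i ∧ i + 1 < n then
    u ⟨i - 1, by omega⟩ - 2 * u ⟨i, by omega⟩ + u ⟨i + 1, h.2⟩ else 0

/-- Negated third difference `u_{i-1} - 3 u_i + 3 u_{i+1} - u_{i+2}`. -/
private noncomputable def Td {n : ℕ} (u : Fin n → ℝ) (i : ℕ) : ℝ :=
  if h : 1 ≤ i ∧ i + 2 < n then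
    u ⟨i - 1, by omega⟩ - 3 * u ⟨i, by omega⟩ + 3 * u ⟨i + 1, by omega⟩ - u ⟨i + 2, h.2⟩
  else 0

private lemma Vd_eq {n : ℕ} (u : Fin n → ℝ) {i a b : ℕ} (h1 : a + 1 = i) (h2 : i + 1 = b)
    (hb : b < n) :
    Vd u i = u ⟨a, by omega⟩ - 2 * u ⟨i, by omega⟩ + u ⟨b, hb⟩ := by
  have hc : 1 ≤ i ∧ i + 1 < n := ⟨by omega, by omega⟩
  rw [Vd, dif_pos hc, ueq u (show i - 1 = a by omega) (by omega) (by omega),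
    ueq u h2 hc.2 hb]

private lemma Td_eq {n : ℕ} (u : Fin n → ℝ) {i a b c : ℕ} (h1 : a + 1 = i) (h2 : i + 1 = b)
    (h3 : i + 2 = c) (hc : c < n) :
    Td u i = u ⟨a, by omega⟩ - 3 * u ⟨i, by omega⟩ + 3 * u ⟨b, by omega⟩ - u ⟨c, hc⟩ := by
  have hcc : 1 ≤ i ∧ i + 2 < n := ⟨by omega, by omega⟩
  rw [Td, dif_pos hcc, ueq u (show i - 1 = a by omega) (by omega) (by omega),
    ueq u h2 (by omega) (by omega), ueq u h3 hcc.2 hc]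

/-- If `A u > 0` componentwise for the clamped-free beam matrix `A`, then for
every `1 ≤ j ≤ n - 3` (1-based indices; `u_j` is `u ⟨j-1,_⟩`):
`u_{j+2} - u_{j+1} > u_{j+1} - u_j` and `3(u_{j+2} - u_{j+1}) > u_{j+3} - u_j`. -/
theorem A_CF_mulVec_pos_differences (n : ℕ) (hn : 5 ≤ n) (u : Fin n → ℝ)
    (hu : ∀ i : Fin n, 0 < (A_CF n).mulVec u i) :
    ∀ j : ℕ, ∀ _hj1 : 1 ≤ j, ∀ _hj2 : j ≤ n - 3,
      (u ⟨j, by omega⟩ - u ⟨j - 1, by omega⟩ <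
        u ⟨j + 1, by omega⟩ - u ⟨j, by omega⟩) ∧
      (u ⟨j + 2, by omega⟩ - u ⟨j - 1, by omega⟩ <
        3 * (u ⟨j + 1, by omega⟩ - u ⟨j, by omega⟩)) := by
  intro j hj1 hj2
  -- last row : second difference at `n-2` is positive
  have hF2 : 0 < Vd u (n - 2) := by
    have h := hu ⟨n - 1, by omega⟩
    rw [row_last hn u] at h
    rw [Vd_eq u (show n - 3 + 1 = n - 2 by omega) (show n - 2 + 1 = n - 1 by omega) (by omega)]
    linarith
  -- penultimate row
  have hF1 : Vd u (n - 2) < Td u (n - 3) := by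
    have h := hu ⟨n - 2, by omega⟩
    rw [row_penult hn u] at h
    rw [Vd_eq u (show n - 3 + 1 = n - 2 by omega) (show n - 2 + 1 = n - 1 by omega) (by omega),
      Td_eq u (show n - 4 + 1 = n - 3 by omega) (show n - 3 + 1 = n - 2 by omega)
        (show n - 3 + 2 = n - 1 by omega) (by omega)]
    linarith
  -- interior rows
  have hF3 : ∀ i : ℕ, 2 ≤ i → i ≤ n - 3 → Td u i < Td u (i - 1) := by
    intro i h2 h3
    have h := hu ⟨i, by omega⟩
    rw [row_interior hn u i h2 h3] at h
    rw [Td_eq u (show i - 2 + 1 = i - 1 by omega) (show i - 1 + 1 = i by omega)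
        (show i - 1 + 2 = i + 1 by omega) (by omega),
      Td_eq u (show i - 1 + 1 = i by omega) rfl rfl (by omega)]
    linarith
  -- third differences are positive, by downward induction
  have hTposAux : ∀ d : ℕ, ∀ m : ℕ, 1 ≤ m → m = n - 3 - d → 0 < Td u m := by
    intro d
    induction d with
    | zero =>
      intro m h1 hm
      have hm' : m = n - 3 := by omega
      subst hm'
      linarith
    | succ d ih =>
      intro m h1 hm
      have h5 := hF3 (m + 1) (by omega) (by omega)
      have he : m + 1 - 1 = m := by omega
      rw [he] at h5
      have h6 := ih (m + 1) (by omega) (by omega)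
      linarith
  have hTpos : ∀ m : ℕ, 1 ≤ m → m ≤ n - 3 → 0 < Td u m := fun m h1 h2 =>
    hTposAux (n - 3 - m) m h1 (by omega)
  -- relation `Td = Vd - Vd ∘ (·+1)`
  have hTV : ∀ i : ℕ, 1 ≤ i → i + 2 < n → Td u i = Vd u i - Vd u (i + 1) := by
    intro i h1 h2
    rw [Td_eq u (show i - 1 + 1 = i by omega) rfl rfl (by omega),
      Vd_eq u (show i - 1 + 1 = i by omega) rfl (by omega),
      Vd_eq u (show i + 1 = i + 1 from rfl) rfl (by omega)]
    ring
  -- second differences are positive, by downward induction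
  have hVposAux : ∀ d : ℕ, ∀ m : ℕ, 1 ≤ m → m = n - 2 - d → 0 < Vd u m := by
    intro d
    induction d with
    | zero =>
      intro m h1 hm
      have hm' : m = n - 2 := by omega
      subst hm'
      exact hF2
    | succ d ih =>
      intro m h1 hm
      have h6 := ih (m + 1) (by omega) (by omega)
      have h7 := hTpos m h1 (by omega)
      have h8 := hTV m h1 (by omega)
      linarith
  have hVpos : ∀ m : ℕ, 1 ≤ m → m ≤ n - 2 → 0 < Vd u m := fun m h1 h2 =>
    hVposAux (n - 2 - m) m h1 (by omega)
  constructor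
  · have h := hVpos j hj1 (by omega)
    rw [Vd_eq u (show j - 1 + 1 = j by omega) rfl (by omega)] at h
    linarith
  · have h := hTpos j hj1 hj2
    rw [Td_eq u (show j - 1 + 1 = j by omega) rfl rfl (by omega)] at h
    linarith
end
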